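/- Let {M_m} be a sequence of n×n real symmetric matrices converging to 0 such that M_m/‖M_m‖ converges to a symmetric matrix M. Let μ ∈ ℝ^n have nonincreasing entries and let U_m → U be a convergent sequence of orthogonal matrices such that Diag μ + M_m = U_m (Diag λ(Diag μ + M_m)) U_mᵀ for all m. Then for every k-tensor T on ℝ^n that is μ-block-constant and every permutation σ of {1,…,k}: lim_{m→∞} ( U_m (Diag^σ T) U_mᵀ − Diag^σ T ) / ‖M_m‖ = Σ_{l=1}^k ( Diag^{σ_{(l)}} T^{(l)}_out )[M], the limit being taken in the finite-dimensional space of 2k-tensors on ℝ^n. -/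

import Mathlib

open Matrix Filter

noncomputable section

attribute [local instance] Matrix.normedAddCommGroup Matrix.normedSpace

/-- The space of `n × n` real matrices. -/
abbrev Mat (n : ℕ) := Matrix (Fin n) (Fin n) ℝ

/-- A `k`-tensor on `ℝ^n`. -/
abbrev Tens (k n : ℕ) := (Fin k → Fin n) → ℝ

/-- A `2k`-tensor on `ℝ^n`, indices grouped into `k` upper and `k` lower ones. -/
abbrev Tens2 (k n : ℕ) := (Fin k → Fin n) → (Fin k → Fin n) → ℝ

/-- `eig` assigns to every symmetric matrix its vector of eigenvalues ordered
nonincreasingly, as witnessed by an orthogonal diagonalization. -/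
def IsEigsOf {n : ℕ} (eig : Mat n → (Fin n → ℝ)) : Prop :=
  ∀ A : Mat n, A.IsSymm →
    (∀ i j : Fin n, i ≤ j → eig A j ≤ eig A i) ∧
    ∃ V : Mat n, Vᵀ * V = 1 ∧ V * Vᵀ = 1 ∧ A = V * Matrix.diagonal (eig A) * Vᵀ

/-- `Diag^σ T`. -/
def DiagS {k n : ℕ} (σ : Equiv.Perm (Fin k)) (T : Tens k n) : Tens2 k n :=
  fun i j => if ∀ s : Fin k, i s = j (σ s) then T i else 0

/-- Conjugation of a `2k`-tensor by an orthogonal matrix. -/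
def conj2 {k n : ℕ} (V : Mat n) (S : Tens2 k n) : Tens2 k n :=
  fun i j => ∑ p : Fin k → Fin n, ∑ q : Fin k → Fin n,
    S p q * (∏ s : Fin k, V (i s) (p s)) * ∏ s : Fin k, V (j s) (q s)

/-- Contraction of the last matrix slot of a `2(k+1)`-tensor against a matrix `M`. -/
def contrM {k n : ℕ} (S : Tens2 (k + 1) n) (M : Mat n) : Tens2 k n :=
  fun p q => ∑ a : Fin n, ∑ b : Fin n, S (Fin.snoc p a) (Fin.snoc q b) * M a b

/-- A permutation of `{1,…,k}` viewed as a permutation of `{1,…,k+1}` fixing `k+1`. -/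
def liftPerm {k : ℕ} (σ : Equiv.Perm (Fin k)) : Equiv.Perm (Fin (k + 1)) :=
  (Equiv.permCongr (finSuccEquivLast (n := k)).symm) σ.optionCongr

/-- `σ_{(l)} = σ ∘ τ_l`, where `τ_l` is the transposition `(l, k+1)`. -/
def permIns {k : ℕ} (σ : Equiv.Perm (Fin k)) (l : Fin (k + 1)) : Equiv.Perm (Fin (k + 1)) :=
  liftPerm σ * Equiv.swap l (Fin.last k)

/-- `T^{(l)}_out` with respect to `μ`. -/
def Tout {k n : ℕ} (μ : Fin n → ℝ) (T : Tens k n) (l : Fin k) : Tens (k + 1) n :=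
  fun i =>
    if μ (i l.castSucc) = μ (i (Fin.last k)) then 0
    else (T (Function.update (Fin.init i) l (i (Fin.last k))) - T (Fin.init i)) /
      (μ (i (Fin.last k)) - μ (i l.castSucc))

/-- `T` is `μ`-block-constant. -/
def BlockConst {k n : ℕ} (μ : Fin n → ℝ) (T : Tens k n) : Prop :=
  ∀ i j : Fin k → Fin n, (∀ s : Fin k, μ (i s) = μ (j s)) → T i = T j
section AuxLemmas

lemma entry_tendsto {n : ℕ} {A : ℕ → Mat n} {L : Mat n}
    (h : Filter.Tendsto A Filter.atTop (nhds L)) (a b : Fin n) :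
    Filter.Tendsto (fun m => A m a b) Filter.atTop (nhds (L a b)) := by
  exact tendsto_pi_nhds.mp (tendsto_pi_nhds.mp h a) b

lemma tendsto_prod_sub {K : ℕ} (f g : Fin K → ℕ → ℝ) (a x : Fin K → ℝ) (ε : ℕ → ℝ)
    (hf : ∀ s, Filter.Tendsto (f s) Filter.atTop (nhds (a s)))
    (hg : ∀ s, Filter.Tendsto (g s) Filter.atTop (nhds (a s)))
    (hx : ∀ s, Filter.Tendsto (fun m => (ε m)⁻¹ * (f s m - g s m)) Filter.atTop (nhds (x s))) :
    Filter.Tendsto (fun m => (ε m)⁻¹ * (∏ s, f s m - ∏ s, g s m)) Filter.atTop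
      (nhds (∑ l, ∏ s, if s = l then x s else a s)) := by
  induction K with
  | zero => simpa using tendsto_const_nhds
  | succ K ih =>
    have hrest : Filter.Tendsto (fun m => ∏ t : Fin K, f t.succ m) Filter.atTop
        (nhds (∏ t : Fin K, a t.succ)) := tendsto_finset_prod _ (fun s _ => hf s.succ)
    have key := ih (fun t => f t.succ) (fun t => g t.succ) (fun t => a t.succ)
      (fun t => x t.succ) (fun t => hf t.succ) (fun t => hg t.succ) (fun t => hx t.succ)
    have h1 := ((hx 0).mul hrest).add ((hg 0).mul key)
    have hfun : ∀ m, (ε m)⁻¹ * (f 0 m - g 0 m) * ∏ t : Fin K, f t.succ m +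
        g 0 m * ((ε m)⁻¹ * (∏ t : Fin K, f t.succ m - ∏ t : Fin K, g t.succ m))
        = (ε m)⁻¹ * (∏ s : Fin (K+1), f s m - ∏ s, g s m) := by
      intro m; rw [Fin.prod_univ_succ, Fin.prod_univ_succ]; ring
    have hval : x 0 * ∏ t : Fin K, a t.succ +
        a 0 * ∑ l : Fin K, ∏ s : Fin K, (if s = l then x s.succ else a s.succ)
        = ∑ l : Fin (K+1), ∏ s, (if s = l then x s else a s) := by
      rw [Fin.sum_univ_succ, Finset.mul_sum]
      congr 1
      · rw [Fin.prod_univ_succ, if_pos rfl]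
        exact congrArg (x 0 * ·)
          (Finset.prod_congr rfl fun t _ => by rw [if_neg (Fin.succ_ne_zero t)]).symm
      · refine Finset.sum_congr rfl fun t _ => ?_
        rw [Fin.prod_univ_succ, if_neg (Fin.succ_ne_zero t).symm]
        exact congrArg (a 0 * ·)
          (Finset.prod_congr rfl fun t' _ => by simp [Fin.succ_inj]).symm
    rw [← hval]
    exact h1.congr hfun

lemma conj2_diags_apply {k n : ℕ} (σ : Equiv.Perm (Fin k)) (T : Tens k n) (W : Mat n)
    (i j : Fin k → Fin n) :
    conj2 W (DiagS σ T) i j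
      = ∑ p : Fin k → Fin n, T p * ∏ s, (W (i s) (p s) * W (j (σ s)) (p s)) := by
  unfold conj2 DiagS
  refine Finset.sum_congr rfl (fun p _ => ?_)
  rw [Finset.sum_eq_single (fun t => p (σ.symm t))]
  · have hc : (∀ s, p s = p (σ.symm (σ s))) := by simp
    rw [if_pos hc]
    have h2 : (∏ s, W (j s) (p (σ.symm s))) = ∏ s, W (j (σ s)) (p s) := by
      rw [← Equiv.prod_comp σ (fun t => W (j t) (p (σ.symm t)))]
      simp
    rw [h2, Finset.prod_mul_distrib, ← mul_assoc]
  · intro q _ hq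
    rw [if_neg, zero_mul, zero_mul]
    intro hc
    apply hq; funext t
    have := hc (σ.symm t); simpa using this.symm
  · simp

lemma diags_apply_boole {k n : ℕ} (σ : Equiv.Perm (Fin k)) (T : Tens k n)
    (i j : Fin k → Fin n) :
    DiagS σ T i j = T i * ∏ s, (if i s = j (σ s) then (1:ℝ) else 0) := by
  unfold DiagS
  rw [Finset.prod_boole]
  by_cases h : ∀ s, i s = j (σ s) <;> simp [h]

lemma liftPerm_castSucc {k : ℕ} (σ : Equiv.Perm (Fin k)) (t : Fin k) :
    liftPerm σ t.castSucc = (σ t).castSucc := by simp [liftPerm]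

lemma liftPerm_last {k : ℕ} (σ : Equiv.Perm (Fin k)) :
    liftPerm σ (Fin.last k) = Fin.last k := by simp [liftPerm]

lemma permIns_castSucc_ne {k : ℕ} (σ : Equiv.Perm (Fin k)) (l t : Fin k) (h : t ≠ l) :
    permIns σ l.castSucc t.castSucc = (σ t).castSucc := by
  rw [permIns, Equiv.Perm.mul_apply,
    Equiv.swap_apply_of_ne_of_ne (fun hc => h (Fin.castSucc_injective _ hc))
      (Fin.castSucc_lt_last t).ne, liftPerm_castSucc]

lemma permIns_castSucc_self {k : ℕ} (σ : Equiv.Perm (Fin k)) (l : Fin k) :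
    permIns σ l.castSucc l.castSucc = Fin.last k := by
  rw [permIns, Equiv.Perm.mul_apply, Equiv.swap_apply_left, liftPerm_last]

lemma permIns_last {k : ℕ} (σ : Equiv.Perm (Fin k)) (l : Fin k) :
    permIns σ l.castSucc (Fin.last k) = (σ l).castSucc := by
  rw [permIns, Equiv.Perm.mul_apply, Equiv.swap_apply_right, liftPerm_castSucc]

lemma contrM_eval {k n : ℕ} (μ : Fin n → ℝ) (T : Tens k n) (σ : Equiv.Perm (Fin k))
    (Mm : Mat n) (l : Fin k) (i j : Fin k → Fin n) :
    contrM (DiagS (permIns σ l.castSucc) (Tout μ T l)) Mm i j =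
      (if ∀ t, t ≠ l → i t = j (σ t) then
        (if μ (i l) = μ (j (σ l)) then 0 else
          (T (Function.update i l (j (σ l))) - T i) / (μ (j (σ l)) - μ (i l)))
       else 0) * Mm (j (σ l)) (i l) := by
  have hDS : ∀ a b : Fin n, DiagS (permIns σ l.castSucc) (Tout μ T l) (Fin.snoc i a) (Fin.snoc j b)
      = if (a = j (σ l) ∧ b = i l ∧ ∀ t, t ≠ l → i t = j (σ t))
        then Tout μ T l (Fin.snoc i a) else 0 := by
    intro a b; unfold DiagS
    refine if_congr ?_ rfl rfl
    constructor
    · intro h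
      refine ⟨?_, ?_, ?_⟩
      · have := h (Fin.last k); rw [permIns_last] at this; simpa using this
      · have := h l.castSucc; rw [permIns_castSucc_self] at this
        simpa using this.symm
      · intro t ht
        have := h t.castSucc; rw [permIns_castSucc_ne σ l t ht] at this; simpa using this
    · rintro ⟨ha, hb, hC⟩ s
      refine Fin.lastCases ?_ ?_ s
      · rw [permIns_last]; simpa using ha
      · intro t
        by_cases ht : t = l
        · subst ht; rw [permIns_castSucc_self]; simpa using hb.symm
        · rw [permIns_castSucc_ne σ l t ht]; simpa using hC t ht
  have hTout : Tout μ T l (Fin.snoc i (j (σ l))) =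
      if μ (i l) = μ (j (σ l)) then 0
      else (T (Function.update i l (j (σ l))) - T i) / (μ (j (σ l)) - μ (i l)) := by
    unfold Tout; simp [Fin.snoc_castSucc, Fin.snoc_last, Fin.init_snoc]
  unfold contrM
  rw [Finset.sum_eq_single (j (σ l))]
  · rw [Finset.sum_eq_single (i l)]
    · rw [hDS]; simp only [eq_self_iff_true, true_and, and_true]
      by_cases hC : ∀ t, t ≠ l → i t = j (σ t)
      · rw [if_pos hC, if_pos hC, hTout]
      · rw [if_neg hC, if_neg hC]
    · intro b _ hb
      rw [hDS, if_neg (fun hc => hb hc.2.1), zero_mul]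
    · intro h; exact absurd (Finset.mem_univ _) h
  · intro a _ ha
    refine Finset.sum_eq_zero (fun b _ => ?_)
    rw [hDS, if_neg (fun hc => ha hc.1), zero_mul]
  · intro h; exact absurd (Finset.mem_univ _) h

open Polynomial in
lemma sorted_eq_of_sim {n : ℕ} (μ ν : Fin n → ℝ)
    (hμ : ∀ i j : Fin n, i ≤ j → μ j ≤ μ i) (hν : ∀ i j : Fin n, i ≤ j → ν j ≤ ν i)
    (Ub : Mat n) (hUtU : Ubᵀ * Ub = 1)
    (hsim : Ubᵀ * Matrix.diagonal μ * Ub = Matrix.diagonal ν) : ν = μ := by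
  have hdet : ∀ t : ℝ, ∏ a, (t - μ a) = ∏ a, (t - ν a) := by
    intro t
    have h1 : Matrix.diagonal (fun a => ν a - t) = Ubᵀ * Matrix.diagonal (fun a => μ a - t) * Ub := by
      have hd : ∀ (w : Fin n → ℝ), Matrix.diagonal (fun a => w a - t)
          = Matrix.diagonal w - t • (1 : Mat n) := by
        intro w; ext a b
        by_cases h : a = b <;>
          simp [h, Matrix.diagonal_apply, Matrix.one_apply, Matrix.smul_apply]
      rw [hd, hd, ← hsim]
      rw [Matrix.mul_sub, Matrix.sub_mul]
      congr 1
      rw [Matrix.mul_smul, Matrix.smul_mul, mul_one, hUtU]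
    have h2 := congrArg Matrix.det h1
    rw [Matrix.det_diagonal, Matrix.det_mul, Matrix.det_mul, Matrix.det_diagonal] at h2
    have h3 : Ubᵀ.det * Ub.det = 1 := by rw [← Matrix.det_mul, hUtU, Matrix.det_one]
    have h4 : ∏ a, (ν a - t) = ∏ a, (μ a - t) := by
      rw [h2, mul_right_comm, h3, one_mul]
    have hneg : ∀ w : Fin n → ℝ, ∏ a, (t - w a) = (-1)^n * ∏ a, (w a - t) := by
      intro w
      have hw : ∀ a : Fin n, t - w a = (-1) * (w a - t) := fun a => by ring
      rw [Finset.prod_congr rfl (fun a _ => hw a), Finset.prod_mul_distrib,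
        Finset.prod_const, Finset.card_univ, Fintype.card_fin]
    rw [hneg, hneg, h4]
  have hpoly : (∏ a, (X - C (μ a)) : ℝ[X]) = ∏ a, (X - C (ν a)) := by
    apply Polynomial.funext
    intro r
    simpa [Polynomial.eval_prod] using hdet r
  have hmult : Multiset.map μ Finset.univ.val = Multiset.map ν Finset.univ.val := by
    have hμr : (Multiset.map (fun a => (X - C a : ℝ[X])) (Multiset.map μ Finset.univ.val)).prod
        = ∏ a, (X - C (μ a)) := by
      rw [Multiset.map_map, Finset.prod_eq_multiset_prod]; rfl
    have hνr : (Multiset.map (fun a => (X - C a : ℝ[X])) (Multiset.map ν Finset.univ.val)).prod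
        = ∏ a, (X - C (ν a)) := by
      rw [Multiset.map_map, Finset.prod_eq_multiset_prod]; rfl
    have := congrArg Polynomial.roots (hμr.trans (hpoly.trans hνr.symm))
    rwa [Polynomial.roots_multiset_prod_X_sub_C, Polynomial.roots_multiset_prod_X_sub_C] at this
  rw [Fin.univ_val_map, Fin.univ_val_map, Multiset.coe_eq_coe] at hmult
  have hl : List.ofFn μ = List.ofFn ν := by
    refine hmult.eq_of_pairwise' (r := (· ≥ ·)) ?_ ?_
    · exact List.pairwise_ofFn.mpr (fun i j hij => hμ i j hij.le)
    · exact List.pairwise_ofFn.mpr (fun i j hij => hν i j hij.le)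
  exact (List.ofFn_injective hl).symm

lemma prod_ite_split {k : ℕ} (l : Fin k) (P Q : Fin k → ℝ) :
    ∏ s, (if s = l then P s else Q s) = P l * ∏ s ∈ Finset.univ.erase l, Q s := by
  rw [← Finset.mul_prod_erase Finset.univ _ (Finset.mem_univ l), if_pos rfl]
  exact congrArg (P l * ·)
    (Finset.prod_congr rfl fun s hs => if_neg (Finset.ne_of_mem_erase hs))

lemma sum_T_prod_factor {k n : ℕ} (μ : Fin n → ℝ) (T : Tens k n) (hT : BlockConst μ T)
    (G : Fin k → Fin n → ℝ) (i0 : Fin k → Fin n)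
    (hG : ∀ s y, G s y ≠ 0 → μ y = μ (i0 s)) :
    ∑ p : Fin k → Fin n, T p * ∏ s, G s (p s) = T i0 * ∏ s, (∑ y, G s y) := by
  have h1 : ∀ p : Fin k → Fin n, T p * ∏ s, G s (p s) = T i0 * ∏ s, G s (p s) := by
    intro p
    by_cases hp : (∏ s, G s (p s)) = 0
    · rw [hp, mul_zero, mul_zero]
    · have hnz := Finset.prod_ne_zero_iff.mp hp
      rw [hT p i0 (fun s => hG s (p s) (hnz s (Finset.mem_univ s)))]
  rw [Finset.sum_congr rfl (fun p _ => h1 p), ← Finset.mul_sum]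
  congr 1
  calc (∑ p : Fin k → Fin n, ∏ s, G s (p s))
      = ∑ p ∈ Fintype.piFinset (fun _ : Fin k => (Finset.univ : Finset (Fin n))),
          ∏ s, G s (p s) := by rw [Fintype.piFinset_univ]
    _ = ∏ s, ∑ y, G s y := (Finset.prod_univ_sum _ _).symm

end AuxLemmas
set_option maxHeartbeats 3200000 in
/-- Theorem 2.4 (Corollary 5.8 of [Sendov2003b]): the first-order expansion of
`U_m (Diag^σ T) U_mᵀ` along an eigenvalue perturbation. -/
theorem statement6 {n k : ℕ} (eig : Mat n → (Fin n → ℝ)) (heig : IsEigsOf eig)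
    (μ : Fin n → ℝ) (hμ : ∀ i j : Fin n, i ≤ j → μ j ≤ μ i)
    (M : ℕ → Mat n) (hMsymm : ∀ m, (M m).IsSymm) (hMne : ∀ m, M m ≠ 0)
    (hM0 : Tendsto M atTop (nhds 0))
    (Mlim : Mat n) (hMdir : Tendsto (fun m => ‖M m‖⁻¹ • M m) atTop (nhds Mlim))
    (U : ℕ → Mat n) (hUorth : ∀ m, (U m)ᵀ * U m = 1 ∧ U m * (U m)ᵀ = 1)
    (Ulim : Mat n) (hU : Tendsto U atTop (nhds Ulim))
    (hdecomp : ∀ m, Matrix.diagonal μ + M m =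
      U m * Matrix.diagonal (eig (Matrix.diagonal μ + M m)) * (U m)ᵀ)
    (T : Tens k n) (hT : BlockConst μ T) (σ : Equiv.Perm (Fin k)) :
    Tendsto (fun m => ‖M m‖⁻¹ • (conj2 (U m) (DiagS σ T) - DiagS σ T)) atTop
      (nhds (∑ l : Fin k, contrM (DiagS (permIns σ l.castSucc) (Tout μ T l)) Mlim)) := by
  set ε : ℕ → ℝ := fun m => ‖M m‖ with hε
  set A : ℕ → Mat n := fun m => Matrix.diagonal μ + M m with hA
  set lam : ℕ → Fin n → ℝ := fun m => eig (A m) with hlamdef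
  have hAsymm : ∀ m, (A m).IsSymm := by
    intro m
    unfold Matrix.IsSymm
    rw [hA, Matrix.transpose_add, Matrix.diagonal_transpose, hMsymm m]
  -- entrywise limits
  have hUe : ∀ a b, Tendsto (fun m => U m a b) atTop (nhds (Ulim a b)) :=
    fun a b => entry_tendsto hU a b
  have hMe : ∀ a b, Tendsto (fun m => M m a b) atTop (nhds 0) := by
    intro a b
    simpa using entry_tendsto hM0 a b
  have hMde : ∀ a b, Tendsto (fun m => (ε m)⁻¹ * M m a b) atTop (nhds (Mlim a b)) := by
    intro a b
    have := entry_tendsto hMdir a b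
    simpa [Matrix.smul_apply] using this
  have hεne : ∀ m, ε m ≠ 0 := fun m => norm_ne_zero_iff.mpr (hMne m)
  have hε0 : Tendsto ε atTop (nhds 0) := by simpa using hM0.norm
  -- orthogonality of the limit
  have hUUm : ∀ m a b, (∑ y, U m a y * U m b y) = (if a = b then (1:ℝ) else 0) := by
    intro m a b
    have h1 := Matrix.ext_iff.mpr (hUorth m).2 a b
    simpa [Matrix.mul_apply, Matrix.transpose_apply, Matrix.one_apply] using h1
  have hUtUm : ∀ m a b, (∑ y, U m y a * U m y b) = (if a = b then (1:ℝ) else 0) := by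
    intro m a b
    have h1 := Matrix.ext_iff.mpr (hUorth m).1 a b
    simpa [Matrix.mul_apply, Matrix.transpose_apply, Matrix.one_apply] using h1
  have hsum_UU : ∀ a b, (∑ y, Ulim a y * Ulim b y) = (if a = b then (1:ℝ) else 0) := by
    intro a b
    have h1 : Tendsto (fun m => ∑ y, U m a y * U m b y) atTop
        (nhds (∑ y, Ulim a y * Ulim b y)) :=
      tendsto_finset_sum _ (fun y _ => (hUe a y).mul (hUe b y))
    exact tendsto_nhds_unique (h1.congr (fun m => hUUm m a b)) tendsto_const_nhds
  have hUUt : Ulim * Ulimᵀ = 1 := by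
    ext a b
    have := hsum_UU a b
    simpa [Matrix.mul_apply, Matrix.transpose_apply, Matrix.one_apply] using this
  have hUtU : Ulimᵀ * Ulim = 1 := by
    ext a b
    have h1 : Tendsto (fun m => ∑ y, U m y a * U m y b) atTop
        (nhds (∑ y, Ulim y a * Ulim y b)) :=
      tendsto_finset_sum _ (fun y _ => (hUe y a).mul (hUe y b))
    have h2 := tendsto_nhds_unique (h1.congr (fun m => hUtUm m a b)) tendsto_const_nhds
    simpa [Matrix.mul_apply, Matrix.transpose_apply, Matrix.one_apply] using h2
  -- eigenvalue limits
  have hdiagm : ∀ m, (U m)ᵀ * A m * U m = Matrix.diagonal (lam m) := by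
    intro m
    rw [hA]
    show (U m)ᵀ * (Matrix.diagonal μ + M m) * U m = _
    rw [hdecomp m, ← mul_assoc, ← mul_assoc, (hUorth m).1, one_mul, mul_assoc,
      (hUorth m).1, mul_one]
  have hprod : ∀ b c, Tendsto (fun m => ((U m)ᵀ * A m * U m) b c) atTop
      (nhds ((Ulimᵀ * Matrix.diagonal μ * Ulim) b c)) := by
    intro b c
    have hAe : ∀ x y, Tendsto (fun m => A m x y) atTop (nhds (Matrix.diagonal μ x y)) := by
      intro x y
      have : ∀ m, A m x y = Matrix.diagonal μ x y + M m x y := by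
        intro m; rw [hA]; simp [Matrix.add_apply]
      simpa using (tendsto_const_nhds.add (hMe x y)).congr (fun m => (this m).symm)
    have hexp : ∀ (W V : Mat n), (Wᵀ * V * W) b c = ∑ y, (∑ x, W x b * V x y) * W y c := by
      intro W V; simp [Matrix.mul_apply, Matrix.transpose_apply]
    have h1 : Tendsto (fun m => ∑ y, (∑ x, U m x b * A m x y) * U m y c) atTop
        (nhds (∑ y, (∑ x, Ulim x b * Matrix.diagonal μ x y) * Ulim y c)) :=
      tendsto_finset_sum _ (fun y _ =>
        ((tendsto_finset_sum _ (fun x _ => (hUe x b).mul (hAe x y))).mul (hUe y c)))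
    rw [hexp Ulim (Matrix.diagonal μ)]
    exact h1.congr (fun m => (hexp (U m) (A m)).symm)
  set ν : Fin n → ℝ := fun b => (Ulimᵀ * Matrix.diagonal μ * Ulim) b b with hνdef
  have hlamν : ∀ b, Tendsto (fun m => lam m b) atTop (nhds (ν b)) := by
    intro b
    refine (hprod b b).congr (fun m => ?_)
    rw [hdiagm m, Matrix.diagonal_apply_eq]
  have hsimdiag : Ulimᵀ * Matrix.diagonal μ * Ulim = Matrix.diagonal ν := by
    ext b c
    by_cases h : b = c
    · subst h; rw [Matrix.diagonal_apply_eq]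
    · have h1 : ∀ m, ((U m)ᵀ * A m * U m) b c = 0 := by
        intro m; rw [hdiagm m, Matrix.diagonal_apply_ne _ h]
      have h2 := tendsto_nhds_unique ((hprod b c).congr h1) tendsto_const_nhds
      rw [Matrix.diagonal_apply_ne _ h]
      exact h2 ▸ rfl
  have hνsorted : ∀ b c : Fin n, b ≤ c → ν c ≤ ν b := by
    intro b c hbc
    exact le_of_tendsto_of_tendsto' (hlamν c) (hlamν b)
      (fun m => (heig (A m) (hAsymm m)).1 b c hbc)
  have hνμ : ν = μ := sorted_eq_of_sim μ ν hμ hνsorted Ulim hUtU hsimdiag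
  have hlam : ∀ b, Tendsto (fun m => lam m b) atTop (nhds (μ b)) := by
    intro b; have := hlamν b; rwa [hνμ] at this
  have hsim' : Ulimᵀ * Matrix.diagonal μ * Ulim = Matrix.diagonal μ := by
    rw [hsimdiag, hνμ]
  -- block diagonality of Ulim
  have hblock : ∀ a b, μ a ≠ μ b → Ulim a b = 0 := by
    intro a b hab
    have hDU : Matrix.diagonal μ * Ulim = Ulim * Matrix.diagonal μ := by
      conv_lhs => rw [← one_mul (Matrix.diagonal μ), ← hUUt]
      rw [mul_assoc, mul_assoc, ← mul_assoc Ulimᵀ, hsim']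
    have h1 := Matrix.ext_iff.mpr hDU a b
    rw [Matrix.diagonal_mul, Matrix.mul_diagonal] at h1
    have h2 : Ulim a b * (μ a - μ b) = 0 := by linear_combination h1
    rcases mul_eq_zero.mp h2 with h | h
    · exact h
    · exact absurd (sub_eq_zero.mp h) hab
  have hblock' : ∀ a b, Ulim a b ≠ 0 → μ a = μ b := by
    intro a b h; by_contra hc; exact h (hblock a b hc)
  -- symmetry of Mlim
  have hMlims : ∀ a b, Mlim a b = Mlim b a := by
    intro a b
    have h1 : ∀ m, (ε m)⁻¹ * M m b a = (ε m)⁻¹ * M m a b := by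
      intro m
      have := Matrix.ext_iff.mpr (hMsymm m) a b
      rw [Matrix.transpose_apply] at this
      rw [this]
    exact tendsto_nhds_unique (hMde a b) ((hMde b a).congr h1)
  -- the off-block rate matrix X and the contracted matrix Y
  set X : Fin n → Fin n → ℝ :=
    fun a b => if μ a = μ b then 0 else (Mlim * Ulim) a b / (μ b - μ a) with hXdef
  set Y : Fin n → Fin n → ℝ :=
    fun a b => if μ a = μ b then 0 else Mlim a b / (μ b - μ a) with hYdef
  set Vf : ℕ → Fin n → Fin n → ℝ :=
    fun m a b => if μ a = μ b then U m a b else 0 with hVfdef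
  have hVne : ∀ m a b, Vf m a b ≠ 0 → μ a = μ b := by
    intro m a b h
    by_contra hc
    exact h (by simp [hVfdef, hc])
  have hVe : ∀ a b, Tendsto (fun m => Vf m a b) atTop (nhds (Ulim a b)) := by
    intro a b
    by_cases h : μ a = μ b
    · simpa [hVfdef, h] using hUe a b
    · have : ∀ m, Vf m a b = 0 := fun m => by simp [hVfdef, h]
      rw [hblock a b h]
      exact tendsto_const_nhds.congr (fun m => (this m).symm)
  have hAU : ∀ m, A m * U m = U m * Matrix.diagonal (lam m) := by
    intro m
    rw [hA]
    show (Matrix.diagonal μ + M m) * U m = _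
    rw [hdecomp m, mul_assoc, mul_assoc, (hUorth m).1, mul_one]
  have heq : ∀ m a b, μ a * U m a b + (∑ x, M m a x * U m x b) = U m a b * lam m b := by
    intro m a b
    have h1 := Matrix.ext_iff.mpr (hAU m) a b
    rw [Matrix.mul_diagonal] at h1
    have h2 : (A m * U m) a b = μ a * U m a b + ∑ x, M m a x * U m x b := by
      have hAm : A m = Matrix.diagonal μ + M m := rfl
      rw [hAm, Matrix.add_mul, Matrix.add_apply, Matrix.diagonal_mul, Matrix.mul_apply]
    rw [h2] at h1
    exact h1
  have hOXe : ∀ a b, Tendsto (fun m => (ε m)⁻¹ * (U m a b - Vf m a b)) atTop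
      (nhds (X a b)) := by
    intro a b
    by_cases h : μ a = μ b
    · have h0 : ∀ m, (ε m)⁻¹ * (U m a b - Vf m a b) = 0 := by
        intro m; simp [hVfdef, h]
      rw [show X a b = 0 by simp [hXdef, h]]
      exact tendsto_const_nhds.congr (fun m => (h0 m).symm)
    · have hba : μ b ≠ μ a := fun hc => h hc.symm
      have hnum : Tendsto (fun m => (ε m)⁻¹ * (∑ x, M m a x * U m x b)) atTop
          (nhds ((Mlim * Ulim) a b)) := by
        have hexp : ∀ m, (ε m)⁻¹ * (∑ x, M m a x * U m x b)
            = ∑ x, ((ε m)⁻¹ * M m a x) * U m x b := by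
          intro m
          rw [Finset.mul_sum]
          exact Finset.sum_congr rfl fun x _ => (mul_assoc _ _ _).symm
        have h1 : Tendsto (fun m => ∑ x, ((ε m)⁻¹ * M m a x) * U m x b) atTop
            (nhds (∑ x, Mlim a x * Ulim x b)) :=
          tendsto_finset_sum _ (fun x _ => (hMde a x).mul (hUe x b))
        rw [Matrix.mul_apply]
        exact h1.congr (fun m => (hexp m).symm)
      have hden : Tendsto (fun m => lam m b - μ a) atTop (nhds (μ b - μ a)) :=
        (hlam b).sub tendsto_const_nhds
      have hq := hnum.div hden (sub_ne_zero.mpr hba)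
      have hev : ∀ᶠ m in atTop, ((ε m)⁻¹ * (∑ x, M m a x * U m x b)) / (lam m b - μ a)
          = (ε m)⁻¹ * (U m a b - Vf m a b) := by
        filter_upwards [(hlam b).eventually_ne hba] with m hm
        have hm' : lam m b - μ a ≠ 0 := sub_ne_zero.mpr hm
        have hU' : U m a b = (∑ x, M m a x * U m x b) / (lam m b - μ a) := by
          rw [eq_div_iff hm']
          linear_combination (heq m a b).symm
        rw [show Vf m a b = 0 by simp [hVfdef, h], sub_zero, hU', mul_div_assoc]
      rw [show X a b = (Mlim * Ulim) a b / (μ b - μ a) by simp [hXdef, h]]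
      exact hq.congr' hev
  have hsum_x : ∀ a b, (∑ y, X a y * Ulim b y) = Y a b := by
    intro a b
    by_cases hab : μ a = μ b
    · rw [show Y a b = 0 by simp [hYdef, hab]]
      refine Finset.sum_eq_zero (fun y _ => ?_)
      by_cases hy : μ a = μ y
      · rw [show X a y = 0 by simp [hXdef, hy], zero_mul]
      · rw [hblock b y (fun hc => hy (hab.trans hc)), mul_zero]
    · have h1 : ∀ y, X a y * Ulim b y = ((Mlim * Ulim) a y * Ulim b y) / (μ b - μ a) := by
        intro y
        by_cases hyb : μ y = μ b
        · have hay : ¬ μ a = μ y := fun hc => hab (hc.trans hyb)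
          rw [show X a y = (Mlim * Ulim) a y / (μ y - μ a) by simp [hXdef, hay], hyb,
            div_mul_eq_mul_div]
        · rw [hblock b y (fun hc => hyb hc.symm), mul_zero, mul_zero, zero_div]
      rw [Finset.sum_congr rfl (fun y _ => h1 y), ← Finset.sum_div]
      have h2 : (∑ y, (Mlim * Ulim) a y * Ulim b y) = Mlim a b := by
        have h3 : (∑ y, (Mlim * Ulim) a y * Ulim b y) = ((Mlim * Ulim) * Ulimᵀ) a b := by
          simp [Matrix.mul_apply, Matrix.transpose_apply]
        rw [h3, mul_assoc, hUUt, mul_one]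
      rw [h2, show Y a b = Mlim a b / (μ b - μ a) by simp [hYdef, hab]]
  have hsum_xU : ∀ a b, (∑ y, Ulim a y * X b y) = Y b a := by
    intro a b
    rw [← hsum_x b a]
    exact Finset.sum_congr rfl (fun y _ => mul_comm _ _)
  have hY_in : ∀ a b, μ a = μ b → Y a b = 0 := by
    intro a b h; simp [hYdef, h]
  -- pointwise (in the tensor indices) convergence
  rw [tendsto_pi_nhds]
  intro i
  rw [tendsto_pi_nhds]
  intro j
  -- abbreviations for the three product sequences
  have hconj : ∀ m, conj2 (U m) (DiagS σ T) i j
      = ∑ p : Fin k → Fin n, T p * ∏ s, (U m (i s) (p s) * U m (j (σ s)) (p s)) :=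
    fun m => conj2_diags_apply σ T (U m) i j
  -- Piece A : the difference between the U-product and the V-product
  have hA1 : ∀ p : Fin k → Fin n, Tendsto (fun m => (ε m)⁻¹ *
      ((∏ s, (U m (i s) (p s) * U m (j (σ s)) (p s)))
        - ∏ s, (Vf m (i s) (p s) * Vf m (j (σ s)) (p s)))) atTop
      (nhds (∑ l, ∏ s, if s = l then
          X (i s) (p s) * Ulim (j (σ s)) (p s) + Ulim (i s) (p s) * X (j (σ s)) (p s)
        else Ulim (i s) (p s) * Ulim (j (σ s)) (p s))) := by
    intro p
    refine tendsto_prod_sub (fun s m => U m (i s) (p s) * U m (j (σ s)) (p s))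
      (fun s m => Vf m (i s) (p s) * Vf m (j (σ s)) (p s))
      (fun s => Ulim (i s) (p s) * Ulim (j (σ s)) (p s)) _ ε
      (fun s => (hUe _ _).mul (hUe _ _)) (fun s => (hVe _ _).mul (hVe _ _)) (fun s => ?_)
    have hring : ∀ m, ((ε m)⁻¹ * (U m (i s) (p s) - Vf m (i s) (p s))) * U m (j (σ s)) (p s)
        + Vf m (i s) (p s) * ((ε m)⁻¹ * (U m (j (σ s)) (p s) - Vf m (j (σ s)) (p s)))
        = (ε m)⁻¹ * (U m (i s) (p s) * U m (j (σ s)) (p s)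
            - Vf m (i s) (p s) * Vf m (j (σ s)) (p s)) := by
      intro m; ring
    exact (((hOXe _ _).mul (hUe _ _)).add ((hVe _ _).mul (hOXe _ _))).congr hring
  have hPieceA : Tendsto (fun m => (ε m)⁻¹ *
      ((∑ p : Fin k → Fin n, T p * ∏ s, (U m (i s) (p s) * U m (j (σ s)) (p s)))
        - ∑ p : Fin k → Fin n, T p * ∏ s, (Vf m (i s) (p s) * Vf m (j (σ s)) (p s)))) atTop
      (nhds (∑ p : Fin k → Fin n, T p * ∑ l, ∏ s, if s = l then
          X (i s) (p s) * Ulim (j (σ s)) (p s) + Ulim (i s) (p s) * X (j (σ s)) (p s)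
        else Ulim (i s) (p s) * Ulim (j (σ s)) (p s))) := by
    have h1 := tendsto_finset_sum Finset.univ (fun (p : Fin k → Fin n) _ => (hA1 p).const_mul (T p))
    refine h1.congr (fun m => ?_)
    rw [← Finset.sum_sub_distrib, Finset.mul_sum]
    exact Finset.sum_congr rfl (fun p _ => by ring)
  -- Piece B : the V-product minus the constant term
  have hPieceB : Tendsto (fun m => (ε m)⁻¹ *
      ((∑ p : Fin k → Fin n, T p * ∏ s, (Vf m (i s) (p s) * Vf m (j (σ s)) (p s)))
        - DiagS σ T i j)) atTop (nhds 0) := by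
    by_cases hcase : ∀ s, μ (i s) = μ (j (σ s))
    · have hgV : ∀ m, (∑ p : Fin k → Fin n, T p * ∏ s, (Vf m (i s) (p s) * Vf m (j (σ s)) (p s)))
          = T i * ∏ s, (∑ y, Vf m (i s) y * Vf m (j (σ s)) y) := by
        intro m
        refine sum_T_prod_factor μ T hT (fun s y => Vf m (i s) y * Vf m (j (σ s)) y) i
          (fun s y hy => ?_)
        have h1 : Vf m (i s) y ≠ 0 := fun hc => hy (by simp [hc])
        exact (hVne m _ _ h1).symm
      have hSb := diags_apply_boole σ T i j
      have hwlim : ∀ s, Tendsto (fun m => ∑ y, Vf m (i s) y * Vf m (j (σ s)) y) atTop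
          (nhds (if i s = j (σ s) then (1:ℝ) else 0)) := by
        intro s
        have h1 : Tendsto (fun m => ∑ y, Vf m (i s) y * Vf m (j (σ s)) y) atTop
            (nhds (∑ y, Ulim (i s) y * Ulim (j (σ s)) y)) :=
          tendsto_finset_sum _ (fun y _ => (hVe _ _).mul (hVe _ _))
        rwa [hsum_UU] at h1
      have hwrate : ∀ s, Tendsto (fun m => (ε m)⁻¹ *
          ((∑ y, Vf m (i s) y * Vf m (j (σ s)) y)
            - (if i s = j (σ s) then (1:ℝ) else 0))) atTop (nhds 0) := by
        intro s
        have h1 : Tendsto (fun m => ∑ y,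
            -(((ε m)⁻¹ * (U m (i s) y - Vf m (i s) y)) * U m (j (σ s)) y
              + Vf m (i s) y * ((ε m)⁻¹ * (U m (j (σ s)) y - Vf m (j (σ s)) y)))) atTop
            (nhds (∑ y, -((X (i s) y * Ulim (j (σ s)) y) + (Ulim (i s) y * X (j (σ s)) y)))) :=
          tendsto_finset_sum _ (fun y _ =>
            (((hOXe _ _).mul (hUe _ _)).add ((hVe _ _).mul (hOXe _ _))).neg)
        have h2 : (∑ y, -((X (i s) y * Ulim (j (σ s)) y) + (Ulim (i s) y * X (j (σ s)) y))) = 0 := by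
          rw [Finset.sum_neg_distrib, Finset.sum_add_distrib, hsum_x, hsum_xU,
            hY_in _ _ (hcase s), hY_in _ _ (hcase s).symm]
          ring
        have h3 : ∀ m, (∑ y,
            -(((ε m)⁻¹ * (U m (i s) y - Vf m (i s) y)) * U m (j (σ s)) y
              + Vf m (i s) y * ((ε m)⁻¹ * (U m (j (σ s)) y - Vf m (j (σ s)) y))))
            = (ε m)⁻¹ * ((∑ y, Vf m (i s) y * Vf m (j (σ s)) y)
              - (if i s = j (σ s) then (1:ℝ) else 0)) := by
          intro m
          rw [← hUUm m (i s) (j (σ s)), ← Finset.sum_sub_distrib, Finset.mul_sum]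
          exact Finset.sum_congr rfl (fun y _ => by ring)
        have h4 := h1.congr h3
        rwa [h2] at h4
      have hL1 := tendsto_prod_sub (fun s m => ∑ y, Vf m (i s) y * Vf m (j (σ s)) y)
        (fun s _ => if i s = j (σ s) then (1:ℝ) else 0)
        (fun s => if i s = j (σ s) then (1:ℝ) else 0) (fun _ => 0) ε
        hwlim (fun s => tendsto_const_nhds) hwrate
      have hz : (∑ l : Fin k, ∏ s,
          if s = l then (0:ℝ) else (if i s = j (σ s) then (1:ℝ) else 0)) = 0 :=
        Finset.sum_eq_zero fun l _ => Finset.prod_eq_zero (Finset.mem_univ l) (if_pos rfl)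
      have h5 : Tendsto (fun m => T i * ((ε m)⁻¹ *
          ((∏ s, ∑ y, Vf m (i s) y * Vf m (j (σ s)) y)
            - ∏ s, (if i s = j (σ s) then (1:ℝ) else 0)))) atTop (nhds 0) := by
        have := hL1.const_mul (T i)
        rwa [hz, mul_zero] at this
      exact h5.congr (fun m => by rw [hgV m, hSb]; ring)
    · push_neg at hcase
      obtain ⟨s₀, hs₀⟩ := hcase
      have hgV0 : ∀ m, (∑ p : Fin k → Fin n, T p *
          ∏ s, (Vf m (i s) (p s) * Vf m (j (σ s)) (p s))) = 0 := by
        intro m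
        refine Finset.sum_eq_zero (fun p _ => ?_)
        rw [Finset.prod_eq_zero (Finset.mem_univ s₀) ?_, mul_zero]
        by_cases h : μ (i s₀) = μ (p s₀)
        · rw [show Vf m (j (σ s₀)) (p s₀) = 0 by
            simp [hVfdef, show ¬ μ (j (σ s₀)) = μ (p s₀) from fun hc => hs₀ (h.trans hc.symm)],
            mul_zero]
        · rw [show Vf m (i s₀) (p s₀) = 0 by simp [hVfdef, h], zero_mul]
      have hS0 : DiagS σ T i j = 0 :=
        if_neg (fun hall => hs₀ (congrArg μ (hall s₀)))
      refine tendsto_const_nhds.congr (fun m => ?_)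
      rw [hgV0 m, hS0]
      simp
  -- the combinatorial identity for the limit value
  have hper : ∀ l : Fin k,
      (∑ p : Fin k → Fin n, T p * ∏ s, (if s = l
          then X (i s) (p s) * Ulim (j (σ s)) (p s) + Ulim (i s) (p s) * X (j (σ s)) (p s)
          else Ulim (i s) (p s) * Ulim (j (σ s)) (p s)))
      = contrM (DiagS (permIns σ l.castSucc) (Tout μ T l)) Mlim i j := by
    intro l
    rw [contrM_eval μ T σ Mlim l i j]
    have hsplit : ∀ p : Fin k → Fin n, T p * ∏ s, (if s = l
          then X (i s) (p s) * Ulim (j (σ s)) (p s) + Ulim (i s) (p s) * X (j (σ s)) (p s)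
          else Ulim (i s) (p s) * Ulim (j (σ s)) (p s))
        = T p * ∏ s, (if s = l then X (i l) (p s) * Ulim (j (σ l)) (p s)
            else Ulim (i s) (p s) * Ulim (j (σ s)) (p s))
          + T p * ∏ s, (if s = l then Ulim (i l) (p s) * X (j (σ l)) (p s)
            else Ulim (i s) (p s) * Ulim (j (σ s)) (p s)) := by
      intro p
      rw [prod_ite_split l, prod_ite_split l, prod_ite_split l]
      ring
    rw [Finset.sum_congr rfl (fun p _ => hsplit p), Finset.sum_add_distrib]
    -- first sum
    have hfac1 : (∑ p : Fin k → Fin n, T p * ∏ s, (if s = l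
          then X (i l) (p s) * Ulim (j (σ l)) (p s)
          else Ulim (i s) (p s) * Ulim (j (σ s)) (p s)))
        = T (Function.update i l (j (σ l))) *
            ∏ s, ∑ y, (if s = l then X (i l) y * Ulim (j (σ l)) y
              else Ulim (i s) y * Ulim (j (σ s)) y) := by
      refine sum_T_prod_factor μ T hT (fun s y => if s = l then X (i l) y * Ulim (j (σ l)) y
        else Ulim (i s) y * Ulim (j (σ s)) y) (Function.update i l (j (σ l)))
        (fun s y hy => ?_)
      replace hy : (if s = l then X (i l) y * Ulim (j (σ l)) y
        else Ulim (i s) y * Ulim (j (σ s)) y) ≠ 0 := hy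
      by_cases hs : s = l
      · subst hs
        rw [if_pos rfl] at hy
        have h1 : Ulim (j (σ s)) y ≠ 0 := fun hc => hy (by simp [hc])
        rw [Function.update_self]
        exact (hblock' _ _ h1).symm
      · rw [if_neg hs] at hy
        have h1 : Ulim (i s) y ≠ 0 := fun hc => hy (by simp [hc])
        rw [Function.update_of_ne hs]
        exact (hblock' _ _ h1).symm
    have hfac2 : (∑ p : Fin k → Fin n, T p * ∏ s, (if s = l
          then Ulim (i l) (p s) * X (j (σ l)) (p s)
          else Ulim (i s) (p s) * Ulim (j (σ s)) (p s)))
        = T i * ∏ s, ∑ y, (if s = l then Ulim (i l) y * X (j (σ l)) y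
            else Ulim (i s) y * Ulim (j (σ s)) y) := by
      refine sum_T_prod_factor μ T hT (fun s y => if s = l then Ulim (i l) y * X (j (σ l)) y
        else Ulim (i s) y * Ulim (j (σ s)) y) i (fun s y hy => ?_)
      replace hy : (if s = l then Ulim (i l) y * X (j (σ l)) y
        else Ulim (i s) y * Ulim (j (σ s)) y) ≠ 0 := hy
      by_cases hs : s = l
      · subst hs
        rw [if_pos rfl] at hy
        have h1 : Ulim (i s) y ≠ 0 := fun hc => hy (by simp [hc])
        exact (hblock' _ _ h1).symm
      · rw [if_neg hs] at hy
        have h1 : Ulim (i s) y ≠ 0 := fun hc => hy (by simp [hc])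
        exact (hblock' _ _ h1).symm
    rw [hfac1, hfac2]
    -- evaluate the inner sums
    have hev1 : (∏ s, ∑ y, (if s = l then X (i l) y * Ulim (j (σ l)) y
          else Ulim (i s) y * Ulim (j (σ s)) y))
        = Y (i l) (j (σ l)) * ∏ s ∈ Finset.univ.erase l,
            (if i s = j (σ s) then (1:ℝ) else 0) := by
      have h1 : ∀ s : Fin k, (∑ y, (if s = l then X (i l) y * Ulim (j (σ l)) y
            else Ulim (i s) y * Ulim (j (σ s)) y))
          = if s = l then Y (i l) (j (σ l)) else (if i s = j (σ s) then (1:ℝ) else 0) := by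
        intro s
        by_cases hs : s = l
        · simp only [if_pos hs]
          exact hsum_x _ _
        · simp only [if_neg hs]
          exact hsum_UU _ _
      rw [Finset.prod_congr rfl (fun s _ => h1 s), prod_ite_split l]
    have hev2 : (∏ s, ∑ y, (if s = l then Ulim (i l) y * X (j (σ l)) y
          else Ulim (i s) y * Ulim (j (σ s)) y))
        = Y (j (σ l)) (i l) * ∏ s ∈ Finset.univ.erase l,
            (if i s = j (σ s) then (1:ℝ) else 0) := by
      have h1 : ∀ s : Fin k, (∑ y, (if s = l then Ulim (i l) y * X (j (σ l)) y
            else Ulim (i s) y * Ulim (j (σ s)) y))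
          = if s = l then Y (j (σ l)) (i l) else (if i s = j (σ s) then (1:ℝ) else 0) := by
        intro s
        by_cases hs : s = l
        · simp only [if_pos hs]
          exact hsum_xU _ _
        · simp only [if_neg hs]
          exact hsum_UU _ _
      rw [Finset.prod_congr rfl (fun s _ => h1 s), prod_ite_split l]
    rw [hev1, hev2]
    have hCbool : (∏ s ∈ Finset.univ.erase l, (if i s = j (σ s) then (1:ℝ) else 0))
        = if (∀ t, t ≠ l → i t = j (σ t)) then (1:ℝ) else 0 := by
      by_cases hC : ∀ t, t ≠ l → i t = j (σ t)
      · rw [if_pos hC]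
        exact Finset.prod_eq_one (fun s hs => if_pos (hC s (Finset.ne_of_mem_erase hs)))
      · rw [if_neg hC]
        push_neg at hC
        obtain ⟨t, ht, hne⟩ := hC
        exact Finset.prod_eq_zero (Finset.mem_erase.mpr ⟨ht, Finset.mem_univ t⟩) (if_neg hne)
    rw [hCbool]
    by_cases hCt : ∀ t, t ≠ l → i t = j (σ t)
    · rw [if_pos hCt, if_pos hCt, mul_one, mul_one]
      by_cases hμl : μ (i l) = μ (j (σ l))
      · rw [hY_in _ _ hμl, hY_in _ _ hμl.symm, if_pos hμl]
        ring
      · have hd : μ (j (σ l)) - μ (i l) ≠ 0 := sub_ne_zero.mpr (fun hc => hμl hc.symm)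
        have hd' : μ (i l) - μ (j (σ l)) ≠ 0 := sub_ne_zero.mpr hμl
        rw [if_neg hμl,
          show Y (i l) (j (σ l)) = Mlim (i l) (j (σ l)) / (μ (j (σ l)) - μ (i l)) by
            simp [hYdef, hμl],
          show Y (j (σ l)) (i l) = Mlim (j (σ l)) (i l) / (μ (i l) - μ (j (σ l))) by
            simp [hYdef, Ne.symm hμl],
          hMlims (i l) (j (σ l))]
        field_simp
        ring
    · rw [if_neg hCt, if_neg hCt]
      ring
  -- assemble everything
  have htotal := hPieceA.add hPieceB
  rw [add_zero] at htotal
  have hlimval : (∑ p : Fin k → Fin n, T p * ∑ l, ∏ s, if s = l then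
        X (i s) (p s) * Ulim (j (σ s)) (p s) + Ulim (i s) (p s) * X (j (σ s)) (p s)
      else Ulim (i s) (p s) * Ulim (j (σ s)) (p s))
      = ∑ l : Fin k, contrM (DiagS (permIns σ l.castSucc) (Tout μ T l)) Mlim i j := by
    rw [Finset.sum_congr rfl (fun p (_ : p ∈ Finset.univ) => Finset.mul_sum
      (Finset.univ : Finset (Fin k)) _ (T p)), Finset.sum_comm]
    exact Finset.sum_congr rfl (fun l _ => hper l)
  rw [hlimval] at htotal
  have hgoalfun : ∀ m, (ε m)⁻¹ *
      ((∑ p : Fin k → Fin n, T p * ∏ s, (U m (i s) (p s) * U m (j (σ s)) (p s)))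
        - ∑ p : Fin k → Fin n, T p * ∏ s, (Vf m (i s) (p s) * Vf m (j (σ s)) (p s)))
      + (ε m)⁻¹ *
      ((∑ p : Fin k → Fin n, T p * ∏ s, (Vf m (i s) (p s) * Vf m (j (σ s)) (p s)))
        - DiagS σ T i j)
      = (‖M m‖⁻¹ • (conj2 (U m) (DiagS σ T) - DiagS σ T)) i j := by
    intro m
    have h1 : (‖M m‖⁻¹ • (conj2 (U m) (DiagS σ T) - DiagS σ T)) i j
        = (ε m)⁻¹ * (conj2 (U m) (DiagS σ T) i j - DiagS σ T i j) := by
      simp [Pi.smul_apply, Pi.sub_apply, hε]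
    rw [h1, hconj m]
    ring
  have hfinal := htotal.congr hgoalfun
  have hrhs : ∀ i' j', (∑ l : Fin k, contrM (DiagS (permIns σ l.castSucc) (Tout μ T l)) Mlim) i' j'
      = ∑ l : Fin k, contrM (DiagS (permIns σ l.castSucc) (Tout μ T l)) Mlim i' j' := by
    intro i' j'
    rw [Finset.sum_apply, Finset.sum_apply]
  rw [hrhs]
  exact hfinal
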